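/- arXiv:1802.02035 — 3 statements merged into one kernel-verified Lean document; each statement's English description precedes it below -/
import Mathlib

section
/- Let (Ω, μ) be a measure space with μ(Ω) < ∞. Let p : Ω → ℝ be a measurable prior density with p ≥ 0 and ∫_Ω p dμ = 1. Let L, L_N : Ω → ℝ be measurable likelihood functions and suppose there are constants 0 < A ≤ B with A ≤ L(x) ≤ B and A ≤ L_N(x) ≤ B for all N and all x ∈ Ω. Define the normalization constants γ = ∫_Ω L p dμ and γ_N = ∫_Ω L_N p dμ, and the posterior densities f = L·p/γ and f_N = L_N·p/γ_N. Suppose there are a constant C > 0 and a sequence (Q_N) with Q_N → 0 such that sup_{x ∈ Ω} |L_N(x) − L(x)| ≤ C·Q_N for every N. Then there exists a constant K > 0, independent of N, such that for every N, D_KL(f ‖ f_N) = ∫_Ω f log(f/f_N) dμ ≤ K·Q_N². In particular, the Kullback–Leibler divergence converges to zero with twice the convergence rate of the likelihood approximation. -/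
open Filter MeasureTheory

/-- Doubling of the convergence rate in the Kullback--Leibler divergence:
if the approximate likelihoods `L_N` converge to the true likelihood `L`
uniformly with rate `Q_N`, then the Kullback--Leibler divergence between the
true posterior `f = L·p/γ` and the approximate posterior `f_N = L_N·p/γ_N`
is bounded by `K · Q_N²`. -/
theorem KL_posterior_doubled_rate
    {Ω : Type*} [MeasurableSpace Ω] (μ : Measure Ω) [IsFiniteMeasure μ]
    (p : Ω → ℝ) (hp_meas : Measurable p) (hp_nonneg : ∀ x, 0 ≤ p x)
    (hp_int : ∫ x, p x ∂μ = 1)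
    (L : Ω → ℝ) (LN : ℕ → Ω → ℝ)
    (hL_meas : Measurable L) (hLN_meas : ∀ N, Measurable (LN N))
    (A B : ℝ) (hA : 0 < A) (hAB : A ≤ B)
    (hL_bdd : ∀ x, A ≤ L x ∧ L x ≤ B)
    (hLN_bdd : ∀ N x, A ≤ LN N x ∧ LN N x ≤ B)
    (γ : ℝ) (hγ : γ = ∫ x, L x * p x ∂μ)
    (γN : ℕ → ℝ) (hγN : ∀ N, γN N = ∫ x, LN N x * p x ∂μ)
    (f : Ω → ℝ) (hf : ∀ x, f x = L x * p x / γ)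
    (fN : ℕ → Ω → ℝ) (hfN : ∀ N x, fN N x = LN N x * p x / γN N)
    (C : ℝ) (hC : 0 < C)
    (Q : ℕ → ℝ) (hQ : Tendsto Q atTop (nhds 0))
    (hbound : ∀ N, ∀ x, |LN N x - L x| ≤ C * Q N) :
    ∃ K > 0, ∀ N, ∫ x, f x * Real.log (f x / fN N x) ∂μ ≤ K * Q N ^ 2 := by
  have hB : 0 < B := lt_of_lt_of_le hA hAB
  -- p is integrable
  have hint_p : Integrable p μ := by
    by_contra h
    rw [integral_undef h] at hp_int
    norm_num at hp_int
  -- helper: g * p is integrable when g is measurable and bounded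
  have hmul : ∀ (g : Ω → ℝ), Measurable g → ∀ c : ℝ, 0 ≤ c → (∀ x, |g x| ≤ c) →
      Integrable (fun x => g x * p x) μ := by
    intro g hg c hc hb
    refine (hint_p.const_mul c).mono ((hg.mul hp_meas).aestronglyMeasurable) ?_
    filter_upwards with x
    simp only [Real.norm_eq_abs, abs_mul]
    rw [abs_of_nonneg (hp_nonneg x), abs_of_nonneg hc]
    exact mul_le_mul_of_nonneg_right (hb x) (hp_nonneg x)
  have hLabs : ∀ x, |L x| ≤ B := fun x =>
    abs_le.2 ⟨by linarith [(hL_bdd x).1], (hL_bdd x).2⟩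
  have hLNabs : ∀ N x, |LN N x| ≤ B := fun N x =>
    abs_le.2 ⟨by linarith [(hLN_bdd N x).1], (hLN_bdd N x).2⟩
  have hintLp : Integrable (fun x => L x * p x) μ :=
    hmul L hL_meas B hB.le hLabs
  have hintLNp : ∀ N, Integrable (fun x => LN N x * p x) μ := fun N =>
    hmul (LN N) (hLN_meas N) B hB.le (hLNabs N)
  -- γ ≥ A > 0
  have hγA : A ≤ γ := by
    rw [hγ]
    have h1 : ∫ x, A * p x ∂μ ≤ ∫ x, L x * p x ∂μ :=
      integral_mono (hint_p.const_mul A) hintLp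
        (fun x => mul_le_mul_of_nonneg_right (hL_bdd x).1 (hp_nonneg x))
    rwa [integral_const_mul, hp_int, mul_one] at h1
  have hγpos : 0 < γ := lt_of_lt_of_le hA hγA
  have hγNA : ∀ N, A ≤ γN N := by
    intro N
    rw [hγN N]
    have h1 : ∫ x, A * p x ∂μ ≤ ∫ x, LN N x * p x ∂μ :=
      integral_mono (hint_p.const_mul A) (hintLNp N)
        (fun x => mul_le_mul_of_nonneg_right (hLN_bdd N x).1 (hp_nonneg x))
    rwa [integral_const_mul, hp_int, mul_one] at h1
  have hγNpos : ∀ N, 0 < γN N := fun N => lt_of_lt_of_le hA (hγNA N)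
  -- ∫ f = 1
  have hfeq : f = fun x => (L x / γ) * p x := by
    funext x; rw [hf x]; ring
  have hint_f : Integrable f μ := by
    rw [hfeq]
    refine hmul _ (hL_meas.div_const γ) (B / γ) (by positivity) (fun x => ?_)
    rw [abs_div, abs_of_pos hγpos]
    exact div_le_div_of_nonneg_right (hLabs x) hγpos.le
  have hfint1 : ∫ x, f x ∂μ = 1 := by
    simp only [hf]
    rw [integral_div, ← hγ, div_self hγpos.ne']
  -- Ω is nonempty
  have hne : Nonempty Ω := by
    by_contra h
    haveI : IsEmpty Ω := not_nonempty_iff.mp h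
    rw [integral_of_isEmpty] at hp_int
    norm_num at hp_int
  obtain ⟨x0⟩ := hne
  refine ⟨C ^ 2 / A ^ 2, by positivity, fun N => ?_⟩
  set a := C * Q N with ha_def
  have ha : 0 ≤ a := le_trans (abs_nonneg _) (hbound N x0)
  have hLNd : ∀ x, 0 < LN N x := fun x => lt_of_lt_of_le hA (hLN_bdd N x).1
  have hLd : ∀ x, 0 < L x := fun x => lt_of_lt_of_le hA (hL_bdd x).1
  -- the key integrable dominating functions
  set g1 : Ω → ℝ := fun x => (L x * (L x - LN N x) / (γ * LN N x)) * p x with hg1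
  set g3 : Ω → ℝ := fun x => ((LN N x - L x) / γ) * p x with hg3
  set g4 : Ω → ℝ := fun x => ((L x - LN N x) ^ 2 / (γ * LN N x)) * p x with hg4
  have hint_g1 : Integrable g1 μ := by
    refine hmul _ ((hL_meas.mul (hL_meas.sub (hLN_meas N))).div
      (measurable_const.mul (hLN_meas N))) (B * a / (γ * A)) (by positivity)
      (fun x => ?_)
    rw [abs_div]
    refine div_le_div₀ (mul_nonneg hB.le ha) ?_ (mul_pos hγpos hA) ?_
    · rw [abs_mul]
      exact mul_le_mul (hLabs x) (by rw [abs_sub_comm]; exact hbound N x)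
        (abs_nonneg _) hB.le
    · rw [abs_of_pos (mul_pos hγpos (hLNd x))]
      exact mul_le_mul_of_nonneg_left (hLN_bdd N x).1 hγpos.le
  have hint_g3 : Integrable g3 μ := by
    refine hmul _ (((hLN_meas N).sub hL_meas).div_const γ) (a / γ)
      (div_nonneg ha hγpos.le) (fun x => ?_)
    rw [abs_div, abs_of_pos hγpos]
    exact div_le_div_of_nonneg_right (hbound N x) hγpos.le
  have hint_g4 : Integrable g4 μ := by
    refine hmul _ (((hL_meas.sub (hLN_meas N)).pow_const 2).div
      (measurable_const.mul (hLN_meas N))) (a ^ 2 / (γ * A))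
      (div_nonneg (sq_nonneg a) (mul_pos hγpos hA).le) (fun x => ?_)
    rw [abs_div]
    refine div_le_div₀ (sq_nonneg a) ?_ (mul_pos hγpos hA) ?_
    · rw [abs_pow]
      exact pow_le_pow_left₀ (abs_nonneg _) (by rw [abs_sub_comm]; exact hbound N x) 2
    · rw [abs_of_pos (mul_pos hγpos (hLNd x))]
      exact mul_le_mul_of_nonneg_left (hLN_bdd N x).1 hγpos.le
  have hint_g2 : Integrable (fun x => Real.log (γN N / γ) * f x) μ :=
    hint_f.const_mul _
  -- pointwise key inequality
  have hkey : ∀ x, f x * Real.log (f x / fN N x) ≤ g1 x + Real.log (γN N / γ) * f x := by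
    intro x
    rcases (hp_nonneg x).eq_or_lt with h0 | hpos
    · have hfx : f x = 0 := by rw [hf, ← h0, mul_zero, zero_div]
      simp [hg1, hfx, ← h0]
    · have hp0 : p x ≠ 0 := hpos.ne'
      have hγ0 : γ ≠ 0 := hγpos.ne'
      have hγN0 : γN N ≠ 0 := (hγNpos N).ne'
      have hLN0 : LN N x ≠ 0 := (hLNd x).ne'
      have hL0 : L x ≠ 0 := (hLd x).ne'
      have hfNx : 0 < fN N x := by
        rw [hfN]
        exact div_pos (mul_pos (hLNd x) hpos) (hγNpos N)
      have hratio : f x / fN N x = (L x / LN N x) * (γN N / γ) := by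
        rw [hf, hfN]
        field_simp
      have hfx0 : 0 ≤ f x := by
        rw [hf]
        exact div_nonneg (mul_nonneg (hLd x).le hpos.le) hγpos.le
      rw [hratio, Real.log_mul (div_pos (hLd x) (hLNd x)).ne'
        (div_pos (hγNpos N) hγpos).ne', mul_add]
      have h1 : Real.log (L x / LN N x) ≤ L x / LN N x - 1 :=
        Real.log_le_sub_one_of_pos (div_pos (hLd x) (hLNd x))
      have h2 : f x * Real.log (L x / LN N x) ≤ g1 x := by
        calc f x * Real.log (L x / LN N x)
            ≤ f x * (L x / LN N x - 1) := mul_le_mul_of_nonneg_left h1 hfx0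
          _ = g1 x := by
              rw [hf, hg1]
              field_simp
      linarith [h2]
  -- integrate the pointwise bound
  by_cases hintD : Integrable (fun x => f x * Real.log (f x / fN N x)) μ
  swap
  · rw [integral_undef hintD]
    positivity
  have step1 : ∫ x, f x * Real.log (f x / fN N x) ∂μ ≤
      (∫ x, g1 x ∂μ) + Real.log (γN N / γ) := by
    have := integral_mono hintD (hint_g1.add hint_g2) hkey
    simp only [Pi.add_apply] at this
    rwa [integral_add hint_g1 hint_g2, integral_const_mul, hfint1, mul_one] at this
  -- bound the log of the normalization ratio
  have hγdiff : γN N - γ = ∫ x, (LN N x - L x) * p x ∂μ := by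
    rw [hγ, hγN N, ← integral_sub (hintLNp N) hintLp]
    congr 1; funext x; ring
  have step2 : Real.log (γN N / γ) ≤ ∫ x, g3 x ∂μ := by
    have h1 : Real.log (γN N / γ) ≤ γN N / γ - 1 :=
      Real.log_le_sub_one_of_pos (div_pos (hγNpos N) hγpos)
    have h2 : γN N / γ - 1 = (γN N - γ) / γ := by field_simp
    have h3 : ∫ x, g3 x ∂μ = (γN N - γ) / γ := by
      simp only [hg3]
      rw [hγdiff, ← integral_div]
      congr 1; funext x; ring
    linarith
  -- the cancellation: g1 + g3 = g4
  have step3 : (∫ x, g1 x ∂μ) + (∫ x, g3 x ∂μ) = ∫ x, g4 x ∂μ := by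
    rw [← integral_add hint_g1 hint_g3]
    congr 1; funext x
    simp only [hg1, hg3, hg4]
    have h1 := (hLNd x).ne'
    field_simp
    ring
  -- final bound on ∫ g4
  have step4 : ∫ x, g4 x ∂μ ≤ a ^ 2 / (γ * A) := by
    have h1 : ∫ x, g4 x ∂μ ≤ ∫ x, (a ^ 2 / (γ * A)) * p x ∂μ := by
      refine integral_mono hint_g4 (hint_p.const_mul _) (fun x => ?_)
      refine mul_le_mul_of_nonneg_right ?_ (hp_nonneg x)
      refine div_le_div₀ (sq_nonneg a) ?_ (mul_pos hγpos hA) ?_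
      · rw [← sq_abs, abs_sub_comm]
        exact pow_le_pow_left₀ (abs_nonneg _) (hbound N x) 2
      · exact mul_le_mul_of_nonneg_left (hLN_bdd N x).1 hγpos.le
    rwa [integral_const_mul, hp_int, mul_one] at h1
  have step5 : a ^ 2 / (γ * A) ≤ C ^ 2 / A ^ 2 * Q N ^ 2 := by
    have h1 : a ^ 2 / (γ * A) ≤ a ^ 2 / (A * A) := by
      apply div_le_div_of_nonneg_left (sq_nonneg a) (mul_pos hA hA)
      exact mul_le_mul_of_nonneg_right hγA hA.le
    have h2 : a ^ 2 / (A * A) = C ^ 2 / A ^ 2 * Q N ^ 2 := by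
      rw [ha_def]; ring
    linarith
  linarith
end

section
/- Let (Ω, μ) be a measure space with μ(Ω) < ∞. Let p : Ω → ℝ be a measurable prior density with p ≥ 0 and ∫_Ω p dμ = 1. Let L, L_N : Ω → ℝ be measurable likelihood functions and suppose there are constants 0 < A ≤ B with A ≤ L(x) ≤ B and A ≤ L_N(x) ≤ B for all N and all x ∈ Ω. Define γ = ∫_Ω L p dμ, γ_N = ∫_Ω L_N p dμ, f = L·p/γ, and f_N = L_N·p/γ_N. Suppose there are a constant C > 0 and a sequence (Q_N) with Q_N → 0 such that sup_{x ∈ Ω} |L_N(x) − L(x)| ≤ C·Q_N for every N. Then there exists a constant K > 0, independent of N, such that for every N, D_KL(f_N ‖ f) = ∫_Ω f_N log(f_N/f) dμ ≤ K·Q_N². -/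
open Filter MeasureTheory

private lemma log_abs_sub_le {A s t : ℝ} (hA : 0 < A) (hs : A ≤ s) (ht : A ≤ t) :
    |Real.log t - Real.log s| ≤ |t - s| / A := by
  wlog h : s ≤ t generalizing s t
  · rw [abs_sub_comm, abs_sub_comm t s]
    exact this ht hs (le_of_not_ge h)
  have hs0 : 0 < s := hA.trans_le hs
  have ht0 : 0 < t := hA.trans_le ht
  have hlog : Real.log s ≤ Real.log t := Real.log_le_log hs0 h
  rw [abs_of_nonneg (sub_nonneg.2 hlog), abs_of_nonneg (sub_nonneg.2 h),
    ← Real.log_div ht0.ne' hs0.ne']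
  have h1 : Real.log (t / s) ≤ t / s - 1 := Real.log_le_sub_one_of_pos (div_pos ht0 hs0)
  have h2 : t / s - 1 = (t - s) / s := by field_simp
  have h3 : (t - s) / s ≤ (t - s) / A := by
    apply div_le_div_of_nonneg_left (by linarith) hA hs
  linarith

/-- Doubling of the convergence rate in the Kullback--Leibler divergence:
if the approximate likelihoods `L_N` converge to the true likelihood `L`
uniformly with rate `Q_N`, then the reversed Kullback--Leibler divergence `D_KL(f_N ‖ f)` between the
approximate posterior `f_N = L_N·p/γ_N` and the true posterior `f = L·p/γ`
is bounded by `K · Q_N²`. -/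
theorem KL_posterior_reversed_doubled_rate
    {Ω : Type*} [MeasurableSpace Ω] (μ : Measure Ω) [IsFiniteMeasure μ]
    (p : Ω → ℝ) (hp_meas : Measurable p) (hp_nonneg : ∀ x, 0 ≤ p x)
    (hp_int : ∫ x, p x ∂μ = 1)
    (L : Ω → ℝ) (LN : ℕ → Ω → ℝ)
    (hL_meas : Measurable L) (hLN_meas : ∀ N, Measurable (LN N))
    (A B : ℝ) (hA : 0 < A) (hAB : A ≤ B)
    (hL_bdd : ∀ x, A ≤ L x ∧ L x ≤ B)
    (hLN_bdd : ∀ N x, A ≤ LN N x ∧ LN N x ≤ B)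
    (γ : ℝ) (hγ : γ = ∫ x, L x * p x ∂μ)
    (γN : ℕ → ℝ) (hγN : ∀ N, γN N = ∫ x, LN N x * p x ∂μ)
    (f : Ω → ℝ) (hf : ∀ x, f x = L x * p x / γ)
    (fN : ℕ → Ω → ℝ) (hfN : ∀ N x, fN N x = LN N x * p x / γN N)
    (C : ℝ) (hC : 0 < C)
    (Q : ℕ → ℝ) (hQ : Tendsto Q atTop (nhds 0))
    (hbound : ∀ N, ∀ x, |LN N x - L x| ≤ C * Q N) :
    ∃ K > 0, ∀ N, ∫ x, fN N x * Real.log (fN N x / f x) ∂μ ≤ K * Q N ^ 2 := by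
  -- p is integrable
  have hp_intble : Integrable p μ := by
    by_contra h
    rw [integral_undef h] at hp_int
    norm_num at hp_int
  -- Ω is nonempty
  have hΩ : Nonempty Ω := by
    by_contra h
    rw [not_nonempty_iff] at h
    rw [integral_of_isEmpty] at hp_int
    norm_num at hp_int
  -- Q is nonnegative
  have hQnn : ∀ N, 0 ≤ Q N := by
    intro N
    obtain ⟨x⟩ := hΩ
    have h1 := hbound N x
    have h2 := abs_nonneg (LN N x - L x)
    nlinarith
  -- integrability of L·p and LN·p
  have hLp_int : Integrable (fun x => L x * p x) μ :=
    hp_intble.bdd_mul hL_meas.aestronglyMeasurable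
      (c := B) (ae_of_all μ fun x => by
        rw [Real.norm_eq_abs, abs_of_pos (hA.trans_le (hL_bdd x).1)]
        exact (hL_bdd x).2)
  have hLNp_int : ∀ N, Integrable (fun x => LN N x * p x) μ := fun N =>
    hp_intble.bdd_mul (hLN_meas N).aestronglyMeasurable
      (c := B) (ae_of_all μ fun x => by
        rw [Real.norm_eq_abs, abs_of_pos (hA.trans_le (hLN_bdd N x).1)]
        exact (hLN_bdd N x).2)
  have hAp_int : Integrable (fun x => A * p x) μ := hp_intble.const_mul A
  have hBp_int : Integrable (fun x => B * p x) μ := hp_intble.const_mul B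
  -- bounds on γ
  have hγA : A ≤ γ := by
    rw [hγ]
    calc A = ∫ x, A * p x ∂μ := by rw [integral_const_mul, hp_int, mul_one]
      _ ≤ ∫ x, L x * p x ∂μ :=
        integral_mono hAp_int hLp_int fun x =>
          mul_le_mul_of_nonneg_right (hL_bdd x).1 (hp_nonneg x)
  have hγB : γ ≤ B := by
    rw [hγ]
    calc ∫ x, L x * p x ∂μ ≤ ∫ x, B * p x ∂μ :=
        integral_mono hLp_int hBp_int fun x =>
          mul_le_mul_of_nonneg_right (hL_bdd x).2 (hp_nonneg x)
      _ = B := by rw [integral_const_mul, hp_int, mul_one]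
  have hγpos : 0 < γ := hA.trans_le hγA
  have hγNA : ∀ N, A ≤ γN N := by
    intro N
    rw [hγN]
    calc A = ∫ x, A * p x ∂μ := by rw [integral_const_mul, hp_int, mul_one]
      _ ≤ ∫ x, LN N x * p x ∂μ :=
        integral_mono hAp_int (hLNp_int N) fun x =>
          mul_le_mul_of_nonneg_right (hLN_bdd N x).1 (hp_nonneg x)
  have hγNpos : ∀ N, 0 < γN N := fun N => hA.trans_le (hγNA N)
  -- |γN - γ| ≤ C Q N
  have hBpos : (0:ℝ) < B := hA.trans_le hAB
  have hγdiff : ∀ N, |γN N - γ| ≤ C * Q N := by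
    intro N
    have hsub : ∫ x, (LN N x * p x - L x * p x) ∂μ = γN N - γ := by
      rw [integral_sub (hLNp_int N) hLp_int, hγN, hγ]
    rw [← hsub]
    calc |∫ x, (LN N x * p x - L x * p x) ∂μ|
        ≤ ∫ x, |LN N x * p x - L x * p x| ∂μ := by
          simpa [Real.norm_eq_abs] using
            norm_integral_le_integral_norm (μ := μ) (fun x => LN N x * p x - L x * p x)
      _ ≤ ∫ x, (C * Q N) * p x ∂μ := by
          have habs_int : Integrable (fun x => |LN N x * p x - L x * p x|) μ :=
            ((hLNp_int N).sub hLp_int).abs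
          apply integral_mono habs_int (hp_intble.const_mul _)
          intro x
          show |LN N x * p x - L x * p x| ≤ C * Q N * p x
          have : LN N x * p x - L x * p x = (LN N x - L x) * p x := by ring
          rw [this, abs_mul, abs_of_nonneg (hp_nonneg x)]
          exact mul_le_mul_of_nonneg_right (hbound N x) (hp_nonneg x)
      _ = C * Q N := by rw [integral_const_mul, hp_int, mul_one]
  -- f and fN are integrable with integral 1
  have hf_int : Integrable f μ := by
    have : f = fun x => (L x * p x) / γ := funext hf
    rw [this]; exact hLp_int.div_const γ
  have hf_one : ∫ x, f x ∂μ = 1 := by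
    have : f = fun x => (L x * p x) / γ := funext hf
    rw [this, integral_div, ← hγ, div_self hγpos.ne']
  have hfN_int : ∀ N, Integrable (fN N) μ := by
    intro N
    have : fN N = fun x => (LN N x * p x) / γN N := funext (hfN N)
    rw [this]; exact (hLNp_int N).div_const _
  have hfN_one : ∀ N, ∫ x, fN N x ∂μ = 1 := by
    intro N
    have : fN N = fun x => (LN N x * p x) / γN N := funext (hfN N)
    rw [this, integral_div, ← hγN, div_self (hγNpos N).ne']
  -- the constant
  refine ⟨4 * B * C ^ 2 / A ^ 3, by positivity, fun N => ?_⟩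
  set K : ℝ := 4 * B * C ^ 2 / A ^ 3 with hK
  have hKQ : (0:ℝ) ≤ K * Q N ^ 2 := by positivity
  -- pointwise bound
  have hpt : ∀ x, fN N x * Real.log (fN N x / f x) ≤
      K * Q N ^ 2 * p x + (fN N x - f x) := by
    intro x
    rcases eq_or_lt_of_le (hp_nonneg x) with hp0 | hppos
    · simp [hfN N x, hf x, ← hp0]
    have hLx := hL_bdd x
    have hLNx := hLN_bdd N x
    have hLpos : 0 < L x := hA.trans_le hLx.1
    have hLNpos : 0 < LN N x := hA.trans_le hLNx.1
    have hbpos : 0 < f x := by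
      rw [hf]; exact div_pos (mul_pos hLpos hppos) hγpos
    have hapos : 0 < fN N x := by
      rw [hfN]; exact div_pos (mul_pos hLNpos hppos) (hγNpos N)
    -- bound on |log (fN/f)|
    have hlog : |Real.log (fN N x / f x)| ≤ 2 * C * Q N / A := by
      have hrw : Real.log (fN N x / f x) =
          (Real.log (LN N x) - Real.log (L x)) + (Real.log γ - Real.log (γN N)) := by
        rw [Real.log_div hapos.ne' hbpos.ne', hfN, hf,
          Real.log_div (mul_pos hLNpos hppos).ne' (hγNpos N).ne',
          Real.log_div (mul_pos hLpos hppos).ne' hγpos.ne',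
          Real.log_mul hLNpos.ne' hppos.ne', Real.log_mul hLpos.ne' hppos.ne']
        ring
      rw [hrw]
      have h1 : |Real.log (LN N x) - Real.log (L x)| ≤ C * Q N / A := by
        refine (log_abs_sub_le hA hLx.1 hLNx.1).trans ?_
        gcongr
        exact hbound N x
      have h2 : |Real.log γ - Real.log (γN N)| ≤ C * Q N / A := by
        refine (log_abs_sub_le hA (hγNA N) hγA).trans ?_
        rw [abs_sub_comm]
        gcongr
        exact hγdiff N
      calc |(Real.log (LN N x) - Real.log (L x)) + (Real.log γ - Real.log (γN N))|
          ≤ |Real.log (LN N x) - Real.log (L x)| + |Real.log γ - Real.log (γN N)| :=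
            abs_add_le _ _
        _ ≤ C * Q N / A + C * Q N / A := add_le_add h1 h2
        _ = 2 * C * Q N / A := by ring
    -- bound on |fN - f|
    have hdiff : |fN N x - f x| ≤ 2 * B * C * Q N / A ^ 2 * p x := by
      have hrw : fN N x - f x =
          p x * ((LN N x - L x) * γ + L x * (γ - γN N)) / (γN N * γ) := by
        rw [hfN, hf]
        field_simp [hγpos.ne', (hγNpos N).ne']
        ring
      rw [hrw, abs_div, abs_mul]
      rw [abs_of_nonneg (hp_nonneg x), abs_of_pos (mul_pos (hγNpos N) hγpos)]
      have hnum : |(LN N x - L x) * γ + L x * (γ - γN N)| ≤ 2 * B * (C * Q N) := by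
        calc |(LN N x - L x) * γ + L x * (γ - γN N)|
            ≤ |(LN N x - L x) * γ| + |L x * (γ - γN N)| := abs_add_le _ _
          _ = |LN N x - L x| * γ + L x * |γ - γN N| := by
              rw [abs_mul, abs_mul, abs_of_pos hγpos, abs_of_pos hLpos]
          _ ≤ (C * Q N) * B + B * (C * Q N) := by
              have := hγdiff N
              rw [abs_sub_comm] at this
              have h1 : |LN N x - L x| * γ ≤ (C * Q N) * B :=
                mul_le_mul (hbound N x) hγB hγpos.le (mul_nonneg hC.le (hQnn N))
              have h2 : L x * |γ - γN N| ≤ B * (C * Q N) :=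
                mul_le_mul hLx.2 this (abs_nonneg _) (hA.le.trans hAB)
              linarith
          _ = 2 * B * (C * Q N) := by ring
      have hden : A ^ 2 ≤ γN N * γ := by nlinarith [hγNA N, hγA]
      have hnn : 0 ≤ p x * (2 * B * (C * Q N)) :=
        mul_nonneg (hp_nonneg x)
          (mul_nonneg (mul_nonneg (by norm_num) hBpos.le) (mul_nonneg hC.le (hQnn N)))
      calc p x * |(LN N x - L x) * γ + L x * (γ - γN N)| / (γN N * γ)
          ≤ p x * (2 * B * (C * Q N)) / (γN N * γ) := by
            exact div_le_div_of_nonneg_right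
              (mul_le_mul_of_nonneg_left hnum (hp_nonneg x)) (mul_pos (hγNpos N) hγpos).le
          _ ≤ p x * (2 * B * (C * Q N)) / A ^ 2 := by
            apply div_le_div_of_nonneg_left hnn (by positivity) hden
          _ = 2 * B * C * Q N / A ^ 2 * p x := by ring
    -- combine
    have hsplit : fN N x * Real.log (fN N x / f x) =
        (fN N x - f x) * Real.log (fN N x / f x) + f x * Real.log (fN N x / f x) := by
      ring
    have h1 : (fN N x - f x) * Real.log (fN N x / f x) ≤ K * Q N ^ 2 * p x := by
      calc (fN N x - f x) * Real.log (fN N x / f x)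
          ≤ |fN N x - f x| * |Real.log (fN N x / f x)| := by
            rw [← abs_mul]; exact le_abs_self _
        _ ≤ (2 * B * C * Q N / A ^ 2 * p x) * (2 * C * Q N / A) := by
            apply mul_le_mul hdiff hlog (abs_nonneg _)
            have h0 : 0 ≤ 2 * B * C * Q N :=
              mul_nonneg (mul_nonneg (mul_nonneg (by norm_num) hBpos.le) hC.le) (hQnn N)
            exact mul_nonneg (div_nonneg h0 (by positivity)) (hp_nonneg x)
        _ = K * Q N ^ 2 * p x := by rw [hK]; field_simp; ring
    have h2 : f x * Real.log (fN N x / f x) ≤ fN N x - f x := by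
      have hl : Real.log (fN N x / f x) ≤ fN N x / f x - 1 :=
        Real.log_le_sub_one_of_pos (div_pos hapos hbpos)
      calc f x * Real.log (fN N x / f x) ≤ f x * (fN N x / f x - 1) :=
            mul_le_mul_of_nonneg_left hl hbpos.le
        _ = fN N x - f x := by field_simp
    linarith [hsplit, h1, h2]
  -- integrate
  have hKp_int : Integrable (fun x => K * Q N ^ 2 * p x) μ := hp_intble.const_mul _
  have hsub_int : Integrable (fun x => fN N x - f x) μ := (hfN_int N).sub hf_int
  have hrhs_int : Integrable (fun x => K * Q N ^ 2 * p x + (fN N x - f x)) μ :=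
    hKp_int.add hsub_int
  by_cases hint : Integrable (fun x => fN N x * Real.log (fN N x / f x)) μ
  · calc ∫ x, fN N x * Real.log (fN N x / f x) ∂μ
        ≤ ∫ x, (K * Q N ^ 2 * p x + (fN N x - f x)) ∂μ :=
          integral_mono hint hrhs_int hpt
      _ = K * Q N ^ 2 * ∫ x, p x ∂μ + (∫ x, fN N x ∂μ - ∫ x, f x ∂μ) := by
          rw [integral_add hKp_int hsub_int,
            integral_const_mul, integral_sub (hfN_int N) hf_int]
      _ = K * Q N ^ 2 := by rw [hp_int, hfN_one N, hf_one]; ring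
  · rw [integral_undef hint]
    exact hKQ
end

section
/- Let θ_0, …, θ_N be points in ℝ^d, let p : ℝ^d → ℝ be strictly positive, let ζ > 0 and M ≥ 0, and for each k = 0, …, N let ρ_k : ℝ^d → ℝ be a weight function with ζ·p(θ) ≤ ρ_k(θ) ≤ (ζ + M)·p(θ) for all θ. For each k let D_k : ℝ^d → ℝ be a function (the Vandermonde determinant θ ↦ det V(θ_0, …, θ_{k−1}, θ)) such that: (i) ρ_k(θ)·|D_k(θ)| ≤ ρ_k(θ_k)·|D_k(θ_k)| for all θ ∈ ℝ^d (θ_k maximizes the weighted determinant with weight ρ_k); and (ii) D_k(θ_j) = 0 for all j < k. Define the single weighting function q : ℝ^d → ℝ by q(θ) = (ζ + M)·p(θ) if θ ∈ {θ_0, …, θ_N} and q(θ) = ζ·p(θ) otherwise. Then for every k = 0, …, N and every θ ∉ {θ_{k+1}, …, θ_N}, q(θ)·|D_k(θ)| ≤ q(θ_k)·|D_k(θ_k)|; that is, the adaptively weighted Leja nodes are also Leja nodes for the single N-independent weighting function q. -/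
open Classical in
/-- The single `N`-independent weighting function `q`: it equals
`(ζ + M) · p θ` on the node set `s` and `ζ · p θ` elsewhere. -/
noncomputable def adaptiveWeight {α : Type*} (p : α → ℝ) (ζ M : ℝ)
    (s : Set α) (t : α) : ℝ :=
  if t ∈ s then (ζ + M) * p t else ζ * p t

/-- Adaptively weighted Leja nodes are Leja nodes for a single weighting
function: if each node `θ_k` maximizes `ρ_k(θ)·|D_k(θ)|` for a weight `ρ_k`
sandwiched between `ζ·p` and `(ζ+M)·p`, and the Vandermonde determinant
`D_k` vanishes at the earlier nodes, then for every `k` and every `θ` not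
among the later nodes, `q(θ)·|D_k(θ)| ≤ q(θ_k)·|D_k(θ_k)|`, where `q` is the
single weighting function `adaptiveWeight p ζ M {θ_0, …, θ_N}`. -/
theorem adaptive_leja_single_weight
    {d N : ℕ} (θ : Fin (N + 1) → (Fin d → ℝ))
    (p : (Fin d → ℝ) → ℝ) (hp : ∀ t, 0 < p t)
    (ζ M : ℝ) (hζ : 0 < ζ) (hM : 0 ≤ M)
    (ρ : Fin (N + 1) → (Fin d → ℝ) → ℝ)
    (hρ_low : ∀ k t, ζ * p t ≤ ρ k t)
    (hρ_high : ∀ k t, ρ k t ≤ (ζ + M) * p t)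
    (D : Fin (N + 1) → (Fin d → ℝ) → ℝ)
    (hmax : ∀ k t, ρ k t * |D k t| ≤ ρ k (θ k) * |D k (θ k)|)
    (hzero : ∀ k j : Fin (N + 1), j < k → D k (θ j) = 0) :
    ∀ k : Fin (N + 1), ∀ t, (∀ j : Fin (N + 1), k < j → t ≠ θ j) →
      adaptiveWeight p ζ M (Set.range θ) t * |D k t|
        ≤ adaptiveWeight p ζ M (Set.range θ) (θ k) * |D k (θ k)| := by
  intro k t ht
  have hqk : adaptiveWeight p ζ M (Set.range θ) (θ k) = (ζ + M) * p (θ k) := by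
    simp [adaptiveWeight]
  have hrhs_nonneg : 0 ≤ adaptiveWeight p ζ M (Set.range θ) (θ k) * |D k (θ k)| := by
    rw [hqk]
    exact mul_nonneg (mul_nonneg (by linarith) (hp _).le) (abs_nonneg _)
  by_cases hmem : t ∈ Set.range θ
  · obtain ⟨j, rfl⟩ := hmem
    rcases lt_trichotomy j k with h | h | h
    · rw [hzero k j h]
      simpa using hrhs_nonneg
    · rw [h]
    · exact absurd rfl (ht j h)
  · have hqt : adaptiveWeight p ζ M (Set.range θ) t = ζ * p t := by
      simp [adaptiveWeight, hmem]
    rw [hqt, hqk]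
    calc ζ * p t * |D k t| ≤ ρ k t * |D k t| :=
          mul_le_mul_of_nonneg_right (hρ_low k t) (abs_nonneg _)
      _ ≤ ρ k (θ k) * |D k (θ k)| := hmax k t
      _ ≤ (ζ + M) * p (θ k) * |D k (θ k)| :=
          mul_le_mul_of_nonneg_right (hρ_high k (θ k)) (abs_nonneg _)
end
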